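/- Let S consist of 2n points given as n pairs {p_i, q_i} in a metric space, let T be a minimum spanning tree of S, let h be a maximum-weight edge of T, and let T_1, T_2 be the vertex sets of the two components of T after removing h. If neither T_1 nor T_2 contains both points of any pair, then the coloring R = T_1, B = T_2 is feasible and optimal: mstCost(T_1) + mstCost(T_2) = min over all feasible colorings S = R' ∪ B' of (mstCost(R') + mstCost(B')). -/

import Mathlib

variable {α : Type*} [MetricSpace α] [DecidableEq α]

/-- Two points are connected via the edge set `E` (edges usable in both directions). -/
def EdgeConn (E : Finset (α × α)) (x y : α) : Prop :=
  Relation.ReflTransGen (fun a b => (a, b) ∈ E ∨ (b, a) ∈ E) x y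

/-- `E` is (the edge set of) a spanning tree of the complete graph on the finite
point set `X`. -/
def IsSpanningTreeOn (X : Finset α) (E : Finset (α × α)) : Prop :=
  (∀ e ∈ E, e.1 ∈ X ∧ e.2 ∈ X) ∧ E.card + 1 = X.card ∧
    ∀ x ∈ X, ∀ y ∈ X, EdgeConn E x y

/-- The minimum total edge length of a spanning tree on `X`. -/
noncomputable def mstCost (X : Finset α) : ℝ :=
  sInf {c | ∃ E : Finset (α × α), IsSpanningTreeOn X E ∧ c = ∑ e ∈ E, dist e.1 e.2}

namespace MyAux

set_option linter.unusedSectionVars false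

lemma edgeConn_refl {E : Finset (α × α)} {x : α} : EdgeConn E x x := Relation.ReflTransGen.refl

lemma edgeConn_symm {E : Finset (α × α)} {x y : α} (h : EdgeConn E x y) : EdgeConn E y x := by
  induction h with
  | refl => exact Relation.ReflTransGen.refl
  | @tail b c _ hbc ih =>
    exact Relation.ReflTransGen.trans (Relation.ReflTransGen.single (hbc.symm)) ih

lemma edgeConn_mono {E F : Finset (α × α)} (hEF : E ⊆ F) {x y : α}
    (h : EdgeConn E x y) : EdgeConn F x y :=
  Relation.ReflTransGen.mono (r := fun a b => (a, b) ∈ E ∨ (b, a) ∈ E)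
    (fun _ _ hab => hab.imp (@hEF _) (@hEF _)) x y h

lemma edgeConn_empty {x y : α} (h : EdgeConn (∅ : Finset (α × α)) x y) : x = y := by
  induction h with
  | refl => rfl
  | tail _ hbc ih => simp at hbc

/-- paths starting in `A` stay in `A` and use only within-`A` edges, provided every
edge is within `A` or within the complement. -/
lemma edgeConn_filter {E : Finset (α × α)} {A : Finset α}
    (hcl : ∀ f ∈ E, (f.1 ∈ A ∧ f.2 ∈ A) ∨ (f.1 ∉ A ∧ f.2 ∉ A))
    {x y : α} (hx : x ∈ A) (h : EdgeConn E x y) :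
    EdgeConn (E.filter fun f => f.1 ∈ A ∧ f.2 ∈ A) x y ∧ y ∈ A := by
  induction h with
  | refl => exact ⟨Relation.ReflTransGen.refl, hx⟩
  | @tail b c hxb hbc ih =>
    rcases hbc with h1 | h1
    · rcases hcl _ h1 with ⟨hb, hc⟩ | ⟨hb, hc⟩
      · exact ⟨ih.1.tail (Or.inl (Finset.mem_filter.2 ⟨h1, hb, hc⟩)), hc⟩
      · exact absurd ih.2 hb
    · rcases hcl _ h1 with ⟨hc, hb⟩ | ⟨hc, hb⟩
      · exact ⟨ih.1.tail (Or.inr (Finset.mem_filter.2 ⟨h1, hc, hb⟩)), hc⟩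
      · exact absurd ih.2 hb

/-- a detour replacing one edge preserves connectivity -/
lemma edgeConn_erase_of_detour {E : Finset (α × α)} {e : α × α}
    (hd : EdgeConn (E.erase e) e.1 e.2) {x y : α} (h : EdgeConn E x y) :
    EdgeConn (E.erase e) x y := by
  induction h with
  | refl => exact Relation.ReflTransGen.refl
  | @tail b c hxb hbc ih =>
    rcases hbc with h1 | h1
    · by_cases hfe : (b, c) = e
      · exact ih.trans (hfe ▸ hd)
      · exact ih.tail (Or.inl (Finset.mem_erase.2 ⟨hfe, h1⟩))
    · by_cases hfe : (c, b) = e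
      · refine ih.trans ?_
        have : EdgeConn (E.erase e) c b := hfe ▸ hd
        exact edgeConn_symm this
      · exact ih.tail (Or.inr (Finset.mem_erase.2 ⟨hfe, h1⟩))

/-- a path from inside `A` to outside `A` uses a crossing edge -/
lemma exists_cross_edge {E : Finset (α × α)} {A : Finset α} {u v : α}
    (h : EdgeConn E u v) (hu : u ∈ A) (hv : v ∉ A) :
    ∃ e ∈ E, (e.1 ∈ A ∧ e.2 ∉ A) ∨ (e.2 ∈ A ∧ e.1 ∉ A) := by
  induction h with
  | refl => exact absurd hu hv
  | @tail b c hub hbc ih =>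
    by_cases hb : b ∈ A
    · rcases hbc with h1 | h1
      · exact ⟨(b, c), h1, Or.inl ⟨hb, hv⟩⟩
      · exact ⟨(c, b), h1, Or.inr ⟨hb, hv⟩⟩
    · exact ih hb


/-- a connected graph on `X` has at least `|X| - 1` edges -/
lemma conn_card_le (N : ℕ) : ∀ (E : Finset (α × α)), E.card ≤ N → ∀ (X : Finset α),
    (∀ e ∈ E, e.1 ∈ X ∧ e.2 ∈ X) → (∀ x ∈ X, ∀ y ∈ X, EdgeConn E x y) →
    X.card ≤ E.card + 1 := by
  induction N with
  | zero =>
    intro E hEc X hend hconn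
    have hE : E = ∅ := Finset.card_eq_zero.1 (Nat.le_zero.1 hEc)
    subst hE
    rcases Finset.eq_empty_or_nonempty X with rfl | ⟨x, hx⟩
    · simp
    · have : X ⊆ {x} := fun y hy => by
        simpa using (edgeConn_empty (hconn x hx y hy)).symm
      calc X.card ≤ ({x} : Finset α).card := Finset.card_le_card this
        _ = 1 := by simp
        _ ≤ 0 + 1 := le_refl _
  | succ N ih =>
    intro E hEc X hend hconn
    classical
    rcases Finset.eq_empty_or_nonempty E with rfl | ⟨e, he⟩
    · exact ih ∅ (Nat.zero_le _) X (by simp) (by simpa using hconn)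
    have he1X : e.1 ∈ X := (hend e he).1
    have he2X : e.2 ∈ X := (hend e he).2
    have hcardE : 1 ≤ E.card := Finset.card_pos.2 ⟨e, he⟩
    have hErase : (E.erase e).card = E.card - 1 := Finset.card_erase_of_mem he
    have hEraseN : (E.erase e).card ≤ N := by omega
    set A : Finset α := X.filter (fun z => EdgeConn (E.erase e) e.1 z) with hA
    have he1A : e.1 ∈ A := Finset.mem_filter.2 ⟨he1X, Relation.ReflTransGen.refl⟩
    by_cases he2A : e.2 ∈ A
    · -- detour exists, drop e
      have hd : EdgeConn (E.erase e) e.1 e.2 := (Finset.mem_filter.1 he2A).2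
      have := ih (E.erase e) hEraseN X
        (fun f hf => hend f (Finset.mem_of_mem_erase hf))
        (fun x hx y hy => edgeConn_erase_of_detour hd (hconn x hx y hy))
      omega
    · -- e is a bridge
      set B : Finset α := X \ A with hB
      have he2B : e.2 ∈ B := Finset.mem_sdiff.2 ⟨he2X, he2A⟩
      have hAX : A ⊆ X := Finset.filter_subset _ _
      -- classification of edges of E.erase e
      have hclass : ∀ f ∈ E.erase e, (f.1 ∈ A ∧ f.2 ∈ A) ∨ (f.1 ∉ A ∧ f.2 ∉ A) := by
        intro f hf
        have hf1X := (hend f (Finset.mem_of_mem_erase hf)).1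
        have hf2X := (hend f (Finset.mem_of_mem_erase hf)).2
        by_cases h1 : f.1 ∈ A
        · left
          refine ⟨h1, Finset.mem_filter.2 ⟨hf2X, ?_⟩⟩
          exact ((Finset.mem_filter.1 h1).2).tail (Or.inl (by simpa using hf))
        · right
          refine ⟨h1, fun h2 => h1 ?_⟩
          refine Finset.mem_filter.2 ⟨hf1X, ?_⟩
          exact ((Finset.mem_filter.1 h2).2).tail (Or.inr (by simpa using hf))
      set EA : Finset (α × α) := (E.erase e).filter (fun f => f.1 ∈ A ∧ f.2 ∈ A) with hEA
      set EB : Finset (α × α) := (E.erase e).filter (fun f => ¬(f.1 ∈ A ∧ f.2 ∈ A)) with hEB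
      have hEABcard : EA.card + EB.card = (E.erase e).card :=
        Finset.card_filter_add_card_filter_not _
      -- A is connected by EA
      have hconnA : ∀ x ∈ A, ∀ y ∈ A, EdgeConn EA x y := by
        intro x hx y hy
        have hxy : EdgeConn (E.erase e) x y :=
          (edgeConn_symm (Finset.mem_filter.1 hx).2).trans (Finset.mem_filter.1 hy).2
        exact (edgeConn_filter hclass hx hxy).1
      have hendA : ∀ f ∈ EA, f.1 ∈ A ∧ f.2 ∈ A := fun f hf => (Finset.mem_filter.1 hf).2
      -- endpoints of EB lie in B
      have hendB : ∀ f ∈ EB, f.1 ∈ B ∧ f.2 ∈ B := by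
        intro f hf
        have hf' := (Finset.mem_filter.1 hf).1
        have hf1X := (hend f (Finset.mem_of_mem_erase hf')).1
        have hf2X := (hend f (Finset.mem_of_mem_erase hf')).2
        rcases hclass f hf' with hcl | ⟨h1, h2⟩
        · exact absurd hcl (Finset.mem_filter.1 hf).2
        · exact ⟨Finset.mem_sdiff.2 ⟨hf1X, h1⟩, Finset.mem_sdiff.2 ⟨hf2X, h2⟩⟩
      -- key claim: paths among B avoid A (can only touch A through e, returning at e.2)
      have hkey : ∀ u y : α, u ∉ A → EdgeConn E u y →
          (y ∉ A → EdgeConn EB u y) ∧ (y ∈ A → EdgeConn EB u e.2) := by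
        intro u y hu h
        induction h with
        | refl => exact ⟨fun _ => Relation.ReflTransGen.refl, fun hA' => absurd hA' hu⟩
        | @tail b c hub hbc ihk =>
          rcases hbc with h1 | h1
          · by_cases hfe : (b, c) = e
            · have hb : b = e.1 := congrArg Prod.fst hfe
              have hc : c = e.2 := congrArg Prod.snd hfe
              subst hb; subst hc
              exact ⟨fun _ => ihk.2 he1A, fun hA' => absurd hA' he2A⟩
            · have hf : (b, c) ∈ E.erase e := Finset.mem_erase.2 ⟨hfe, h1⟩
              rcases hclass _ hf with ⟨hb, hc⟩ | ⟨hb, hc⟩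
              · exact ⟨fun hc' => absurd hc hc', fun _ => ihk.2 hb⟩
              · refine ⟨fun _ => (ihk.1 hb).tail (Or.inl ?_), fun hA' => absurd hA' hc⟩
                exact Finset.mem_filter.2 ⟨hf, by simp [hb]⟩
          · by_cases hfe : (c, b) = e
            · have hc : c = e.1 := congrArg Prod.fst hfe
              have hb : b = e.2 := congrArg Prod.snd hfe
              subst hc; subst hb
              exact ⟨fun hc' => absurd he1A hc', fun _ => ihk.1 he2A⟩
            · have hf : (c, b) ∈ E.erase e := Finset.mem_erase.2 ⟨hfe, h1⟩
              rcases hclass _ hf with ⟨hc, hb⟩ | ⟨hc, hb⟩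
              · exact ⟨fun hc' => absurd hc hc', fun _ => ihk.2 hb⟩
              · refine ⟨fun _ => (ihk.1 hb).tail (Or.inr ?_), fun hA' => absurd hA' hc⟩
                exact Finset.mem_filter.2 ⟨hf, by simp [hc]⟩
      have hconnB : ∀ x ∈ B, ∀ y ∈ B, EdgeConn EB x y := by
        intro x hx y hy
        have hxX := (Finset.mem_sdiff.1 hx).1
        have hyX := (Finset.mem_sdiff.1 hy).1
        exact (hkey x y (Finset.mem_sdiff.1 hx).2 (hconn x hxX y hyX)).1
          (Finset.mem_sdiff.1 hy).2
      have hEAN : EA.card ≤ N := le_trans (Finset.card_le_card (Finset.filter_subset _ _)) hEraseN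
      have hEBN : EB.card ≤ N := le_trans (Finset.card_le_card (Finset.filter_subset _ _)) hEraseN
      have hAcard := ih EA hEAN A hendA hconnA
      have hBcard := ih EB hEBN B hendB hconnB
      have hXcard : A.card + B.card = X.card := by
        rw [hB, Finset.card_sdiff_of_subset hAX]
        have := Finset.card_le_card hAX
        omega
      omega


def costOf (E : Finset (α × α)) : ℝ := ∑ e ∈ E, dist e.1 e.2

lemma costOf_nonneg (E : Finset (α × α)) : 0 ≤ costOf E :=
  Finset.sum_nonneg fun _ _ => dist_nonneg

lemma mstCost_bddBelow (X : Finset α) :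
    BddBelow {c | ∃ E : Finset (α × α), IsSpanningTreeOn X E ∧ c = ∑ e ∈ E, dist e.1 e.2} :=
  ⟨0, fun c ⟨E, _, hc⟩ => hc ▸ costOf_nonneg E⟩

lemma mstCost_le {X : Finset α} {E : Finset (α × α)} (hE : IsSpanningTreeOn X E) :
    mstCost X ≤ ∑ e ∈ E, dist e.1 e.2 :=
  csInf_le (mstCost_bddBelow X) ⟨E, hE, rfl⟩

/-- star spanning tree -/
lemma exists_spanningTree {X : Finset α} (hX : X.Nonempty) :
    ∃ E : Finset (α × α), IsSpanningTreeOn X E := by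
  obtain ⟨x₀, hx₀⟩ := hX
  refine ⟨(X.erase x₀).image (fun y => (x₀, y)), ?_, ?_, ?_⟩
  · intro e he
    obtain ⟨y, hy, rfl⟩ := Finset.mem_image.1 he
    exact ⟨hx₀, Finset.mem_of_mem_erase hy⟩
  · rw [Finset.card_image_of_injective _ (fun a b hab => congrArg Prod.snd hab),
      Finset.card_erase_of_mem hx₀]
    have : 1 ≤ X.card := Finset.card_pos.2 ⟨x₀, hx₀⟩
    omega
  · intro x hx y hy
    have key : ∀ z ∈ X, EdgeConn ((X.erase x₀).image (fun y => (x₀, y))) x₀ z := by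
      intro z hz
      by_cases hzx : z = x₀
      · exact hzx ▸ Relation.ReflTransGen.refl
      · exact Relation.ReflTransGen.single
          (Or.inl (Finset.mem_image.2 ⟨z, Finset.mem_erase.2 ⟨hzx, hz⟩, rfl⟩))
    exact (edgeConn_symm (key x hx)).trans (key y hy)

/-- the infimum is attained -/
lemma exists_mst {X : Finset α} (hX : X.Nonempty) :
    ∃ E : Finset (α × α), IsSpanningTreeOn X E ∧ mstCost X = ∑ e ∈ E, dist e.1 e.2 := by
  classical
  set s := {c | ∃ E : Finset (α × α), IsSpanningTreeOn X E ∧ c = ∑ e ∈ E, dist e.1 e.2} with hs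
  have hne : s.Nonempty := by
    obtain ⟨E, hE⟩ := exists_spanningTree hX
    exact ⟨_, E, hE, rfl⟩
  have hfin : s.Finite := by
    have : s ⊆ (fun E : Finset (α × α) => ∑ e ∈ E, dist e.1 e.2) ''
        ((X ×ˢ X).powerset : Finset (Finset (α × α))) := by
      rintro c ⟨E, hE, rfl⟩
      refine ⟨E, ?_, rfl⟩
      simp only [Finset.coe_powerset, Set.mem_preimage, Set.mem_powerset_iff,
        Finset.coe_subset, Finset.mem_coe, Finset.mem_powerset]
      intro e heE
      exact Finset.mem_product.2 ⟨(hE.1 e heE).1, (hE.1 e heE).2⟩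
    exact Set.Finite.subset (Set.Finite.image _ ((X ×ˢ X).powerset.finite_toSet)) this
  obtain ⟨E, hE, hc⟩ := hne.csInf_mem hfin
  exact ⟨E, hE, hc⟩

/-- joining spanning trees of two disjoint sets with a bridge -/
lemma union_spanningTree {X Y : Finset α} {E F : Finset (α × α)}
    (hdXY : Disjoint X Y) (hX : IsSpanningTreeOn X E) (hY : IsSpanningTreeOn Y F)
    {x y : α} (hx : x ∈ X) (hy : y ∈ Y) :
    IsSpanningTreeOn (X ∪ Y) (insert (x, y) (E ∪ F)) := by
  classical
  have hEF : Disjoint E F := by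
    rw [Finset.disjoint_left]
    intro e heE heF
    exact (Finset.disjoint_left.1 hdXY) (hX.1 e heE).1 (hY.1 e heF).1
  have hxyEF : (x, y) ∉ E ∪ F := by
    intro hmem
    rcases Finset.mem_union.1 hmem with hmem | hmem
    · exact (Finset.disjoint_left.1 hdXY) (hX.1 _ hmem).2 hy
    · exact (Finset.disjoint_left.1 hdXY) hx (hY.1 _ hmem).1
  refine ⟨?_, ?_, ?_⟩
  · intro e he
    rcases Finset.mem_insert.1 he with rfl | he
    · exact ⟨Finset.mem_union_left _ hx, Finset.mem_union_right _ hy⟩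
    · rcases Finset.mem_union.1 he with he | he
      · exact ⟨Finset.mem_union_left _ (hX.1 e he).1, Finset.mem_union_left _ (hX.1 e he).2⟩
      · exact ⟨Finset.mem_union_right _ (hY.1 e he).1, Finset.mem_union_right _ (hY.1 e he).2⟩
  · rw [Finset.card_insert_of_notMem hxyEF, Finset.card_union_of_disjoint hEF,
      Finset.card_union_of_disjoint hdXY]
    have := hX.2.1; have := hY.2.1
    omega
  · intro u hu v hv
    have hsub : E ∪ F ⊆ insert (x, y) (E ∪ F) := Finset.subset_insert _ _
    have hEs : E ⊆ insert (x, y) (E ∪ F) := (Finset.subset_union_left).trans hsub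
    have hFs : F ⊆ insert (x, y) (E ∪ F) := (Finset.subset_union_right).trans hsub
    have hbridge : EdgeConn (insert (x, y) (E ∪ F)) x y :=
      Relation.ReflTransGen.single (Or.inl (Finset.mem_insert_self _ _))
    have key : ∀ z ∈ X ∪ Y, EdgeConn (insert (x, y) (E ∪ F)) x z := by
      intro z hz
      rcases Finset.mem_union.1 hz with hz | hz
      · exact edgeConn_mono hEs (hX.2.2 x hx z hz)
      · exact hbridge.trans (edgeConn_mono hFs (hY.2.2 y hy z hz))
    exact (edgeConn_symm (key u hu)).trans (key v hv)

end MyAux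

/-- `S` consists of `n` pairs `{pts (i, false), pts (i, true)}`. Let `T` be
a minimum spanning tree of `S`, `h` a maximum-weight edge of `T`, and `T₁, T₂` the vertex
sets of the two components of `T` after removing `h`. If neither `T₁` nor `T₂` contains
both points of any pair, then the coloring `R = T₁, B = T₂` is feasible and optimal for
the Min-Sum 2-MST problem. -/
theorem component_coloring_optimal
    (n : ℕ) (hn : 1 ≤ n)
    (pts : Fin n × Bool → α) (hinj : Function.Injective pts)
    (S : Finset α) (hS : S = Finset.image pts Finset.univ)
    (T : Finset (α × α)) (hT : IsSpanningTreeOn S T)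
    (hTmin : (∑ e ∈ T, dist e.1 e.2) = mstCost S)
    (h : α × α) (hh : h ∈ T) (hmax : ∀ e ∈ T, dist e.1 e.2 ≤ dist h.1 h.2)
    (T₁ T₂ : Finset α) (hpart : T₁ ∪ T₂ = S) (hdisj : Disjoint T₁ T₂)
    (hne1 : T₁.Nonempty) (hne2 : T₂.Nonempty)
    (hcomp : ∀ x ∈ S, ∀ y ∈ S,
      EdgeConn (T.erase h) x y ↔ ((x ∈ T₁ ∧ y ∈ T₁) ∨ (x ∈ T₂ ∧ y ∈ T₂)))
    (hnopairT₁ : ∀ i : Fin n, ¬ (pts (i, false) ∈ T₁ ∧ pts (i, true) ∈ T₁))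
    (hnopairT₂ : ∀ i : Fin n, ¬ (pts (i, false) ∈ T₂ ∧ pts (i, true) ∈ T₂)) :
    (∃ σ : Fin n → Bool,
      T₁ = Finset.image (fun i => pts (i, σ i)) Finset.univ ∧
      T₂ = Finset.image (fun i => pts (i, !(σ i))) Finset.univ) ∧
    mstCost T₁ + mstCost T₂ =
      ⨅ σ : Fin n → Bool,
        (mstCost (Finset.image (fun i => pts (i, σ i)) Finset.univ) +
         mstCost (Finset.image (fun i => pts (i, !(σ i))) Finset.univ)) := by
  classical
  open MyAux in
  have hmemS : ∀ (i : Fin n) (b : Bool), pts (i, b) ∈ S := by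
    intro i b; rw [hS]; exact Finset.mem_image.2 ⟨(i, b), Finset.mem_univ _, rfl⟩
  have hScard : S.card = 2 * n := by
    rw [hS, Finset.card_image_of_injective _ hinj]
    simp [Fintype.card_prod, mul_comm]
  -- Part A: the coloring is feasible
  set σ : Fin n → Bool := fun i => decide (pts (i, true) ∈ T₁) with hσ
  have hone : ∀ i : Fin n, pts (i, σ i) ∈ T₁ ∧ pts (i, !σ i) ∈ T₂ := by
    intro i
    have hfS := hmemS i false
    have htS := hmemS i true
    by_cases hc : pts (i, true) ∈ T₁
    · have hσi : σ i = true := by simp [hσ, hc]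
      have hf2 : pts (i, false) ∈ T₂ := by
        rcases Finset.mem_union.1 (hpart ▸ hfS) with hf | hf
        · exact absurd ⟨hf, hc⟩ (hnopairT₁ i)
        · exact hf
      rw [hσi]; exact ⟨hc, by simpa using hf2⟩
    · have hσi : σ i = false := by simp [hσ, hc]
      have ht2 : pts (i, true) ∈ T₂ := by
        rcases Finset.mem_union.1 (hpart ▸ htS) with hf | hf
        · exact absurd hf hc
        · exact hf
      have hf1 : pts (i, false) ∈ T₁ := by
        rcases Finset.mem_union.1 (hpart ▸ hfS) with hf | hf
        · exact hf
        · exact absurd ⟨hf, ht2⟩ (hnopairT₂ i)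
      rw [hσi]; exact ⟨hf1, by simpa using ht2⟩
  have hT1 : T₁ = Finset.image (fun i => pts (i, σ i)) Finset.univ := by
    apply Finset.Subset.antisymm
    · intro x hx
      have hxS : x ∈ S := hpart ▸ Finset.mem_union_left _ hx
      obtain ⟨⟨i, b⟩, _, rfl⟩ := Finset.mem_image.1 (hS ▸ hxS)
      by_cases hb : b = σ i
      · exact Finset.mem_image.2 ⟨i, Finset.mem_univ _, by rw [hb]⟩
      · have hb' : b = !σ i := by revert hb; cases b <;> cases σ i <;> simp
        exact absurd hx (Finset.disjoint_right.1 hdisj (hb' ▸ (hone i).2))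
    · intro x hx
      obtain ⟨i, _, rfl⟩ := Finset.mem_image.1 hx
      exact (hone i).1
  have hT2 : T₂ = Finset.image (fun i => pts (i, !σ i)) Finset.univ := by
    apply Finset.Subset.antisymm
    · intro x hx
      have hxS : x ∈ S := hpart ▸ Finset.mem_union_right _ hx
      obtain ⟨⟨i, b⟩, _, rfl⟩ := Finset.mem_image.1 (hS ▸ hxS)
      by_cases hb : b = !σ i
      · exact Finset.mem_image.2 ⟨i, Finset.mem_univ _, by rw [hb]⟩
      · have hb' : b = σ i := by revert hb; cases b <;> cases σ i <;> simp
        exact absurd hx (Finset.disjoint_left.1 hdisj (hb' ▸ (hone i).1))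
    · intro x hx
      obtain ⟨i, _, rfl⟩ := Finset.mem_image.1 hx
      exact (hone i).2
  have hinj1 : ∀ τ : Fin n → Bool, Function.Injective (fun i => pts (i, τ i)) := by
    intro τ i j hij
    have := hinj hij
    exact (Prod.mk.injEq _ _ _ _ ▸ this).1
  have hT1card : T₁.card = n := by
    rw [hT1, Finset.card_image_of_injective _ (hinj1 σ)]; simp
  have hT2card : T₂.card = n := by
    rw [hT2, Finset.card_image_of_injective _ (hinj1 (fun i => !σ i))]; simp
  -- Part B : `mstCost T₁ + mstCost T₂ + w(h) ≤ mstCost S`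
  have hsub1 : T₁ ⊆ S := hpart ▸ Finset.subset_union_left
  have hsub2 : T₂ ⊆ S := hpart ▸ Finset.subset_union_right
  have hTend := hT.1
  have hsame : ∀ f ∈ T.erase h, (f.1 ∈ T₁ ∧ f.2 ∈ T₁) ∨ (f.1 ∈ T₂ ∧ f.2 ∈ T₂) := by
    intro f hf
    have hf1 : f.1 ∈ S := (hTend f (Finset.mem_of_mem_erase hf)).1
    have hf2 : f.2 ∈ S := (hTend f (Finset.mem_of_mem_erase hf)).2
    exact (hcomp f.1 hf1 f.2 hf2).1 (Relation.ReflTransGen.single (Or.inl hf))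
  set E₁ : Finset (α × α) := (T.erase h).filter (fun f => f.1 ∈ T₁ ∧ f.2 ∈ T₁) with hE₁
  set E₂ : Finset (α × α) := (T.erase h).filter (fun f => ¬(f.1 ∈ T₁ ∧ f.2 ∈ T₁)) with hE₂
  have hE₂alt : E₂ = (T.erase h).filter (fun f => f.1 ∈ T₂ ∧ f.2 ∈ T₂) := by
    apply Finset.filter_congr
    intro f hf
    rcases hsame f hf with ⟨h1, h2⟩ | ⟨h1, h2⟩
    · simp [h1, h2, Finset.disjoint_left.1 hdisj h1, Finset.disjoint_left.1 hdisj h2]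
    · simp [h1, h2, Finset.disjoint_right.1 hdisj h1]
  have hcl1 : ∀ f ∈ T.erase h, (f.1 ∈ T₁ ∧ f.2 ∈ T₁) ∨ (f.1 ∉ T₁ ∧ f.2 ∉ T₁) := by
    intro f hf
    rcases hsame f hf with hc | ⟨h1, h2⟩
    · exact Or.inl hc
    · exact Or.inr ⟨Finset.disjoint_right.1 hdisj h1, Finset.disjoint_right.1 hdisj h2⟩
  have hcl2 : ∀ f ∈ T.erase h, (f.1 ∈ T₂ ∧ f.2 ∈ T₂) ∨ (f.1 ∉ T₂ ∧ f.2 ∉ T₂) := by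
    intro f hf
    rcases hsame f hf with ⟨h1, h2⟩ | hc
    · exact Or.inr ⟨Finset.disjoint_left.1 hdisj h1, Finset.disjoint_left.1 hdisj h2⟩
    · exact Or.inl hc
  have hconn1 : ∀ x ∈ T₁, ∀ y ∈ T₁, EdgeConn E₁ x y := by
    intro x hx y hy
    have : EdgeConn (T.erase h) x y :=
      (hcomp x (hsub1 hx) y (hsub1 hy)).2 (Or.inl ⟨hx, hy⟩)
    exact (edgeConn_filter hcl1 hx this).1
  have hconn2 : ∀ x ∈ T₂, ∀ y ∈ T₂, EdgeConn E₂ x y := by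
    intro x hx y hy
    have : EdgeConn (T.erase h) x y :=
      (hcomp x (hsub2 hx) y (hsub2 hy)).2 (Or.inr ⟨hx, hy⟩)
    rw [hE₂alt]
    exact (edgeConn_filter hcl2 hx this).1
  have hend1 : ∀ f ∈ E₁, f.1 ∈ T₁ ∧ f.2 ∈ T₁ := fun f hf => (Finset.mem_filter.1 hf).2
  have hend2 : ∀ f ∈ E₂, f.1 ∈ T₂ ∧ f.2 ∈ T₂ := by
    rw [hE₂alt]; exact fun f hf => (Finset.mem_filter.1 hf).2
  have hcard1 := conn_card_le E₁.card E₁ le_rfl T₁ hend1 hconn1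
  have hcard2 := conn_card_le E₂.card E₂ le_rfl T₂ hend2 hconn2
  have hsumcard : E₁.card + E₂.card = (T.erase h).card :=
    Finset.card_filter_add_card_filter_not _
  have hTcard : T.card + 1 = 2 * n := hScard ▸ hT.2.1
  have hTe : (T.erase h).card = T.card - 1 := Finset.card_erase_of_mem hh
  have hE₁card : E₁.card + 1 = T₁.card := by omega
  have hE₂card : E₂.card + 1 = T₂.card := by omega
  have hST1 : IsSpanningTreeOn T₁ E₁ := ⟨hend1, hE₁card, hconn1⟩
  have hST2 : IsSpanningTreeOn T₂ E₂ := ⟨hend2, hE₂card, hconn2⟩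
  have hsplitcost : (∑ e ∈ E₁, dist e.1 e.2) + (∑ e ∈ E₂, dist e.1 e.2)
      + dist h.1 h.2 = ∑ e ∈ T, dist e.1 e.2 := by
    rw [Finset.sum_filter_add_sum_filter_not]
    exact Finset.sum_erase_add _ _ hh
  have keyB : mstCost T₁ + mstCost T₂ + dist h.1 h.2 ≤ mstCost S := by
    have h1 := mstCost_le hST1
    have h2 := mstCost_le hST2
    rw [← hTmin, ← hsplitcost]
    linarith
  -- Part C : lower bound for every feasible coloring
  have lb : ∀ τ : Fin n → Bool,
      mstCost T₁ + mstCost T₂ ≤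
        mstCost (Finset.image (fun i => pts (i, τ i)) Finset.univ) +
        mstCost (Finset.image (fun i => pts (i, !(τ i))) Finset.univ) := by
    intro τ
    set R' := Finset.image (fun i => pts (i, τ i)) Finset.univ with hR'
    set B' := Finset.image (fun i => pts (i, !(τ i))) Finset.univ with hB'
    have hnR : R'.Nonempty := ⟨pts (⟨0, hn⟩, τ ⟨0, hn⟩),
      Finset.mem_image.2 ⟨⟨0, hn⟩, Finset.mem_univ _, rfl⟩⟩
    have hnB : B'.Nonempty := ⟨pts (⟨0, hn⟩, !τ ⟨0, hn⟩),
      Finset.mem_image.2 ⟨⟨0, hn⟩, Finset.mem_univ _, rfl⟩⟩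
    have hdRB : Disjoint R' B' := by
      rw [Finset.disjoint_left]
      rintro x hxR hxB
      obtain ⟨i, _, rfl⟩ := Finset.mem_image.1 hxR
      obtain ⟨j, _, hj⟩ := Finset.mem_image.1 hxB
      have h2 := hinj hj
      have hij : j = i := congrArg Prod.fst h2
      subst hij
      have h3 : (!τ j) = τ j := congrArg Prod.snd h2
      simp at h3
    have hunion : R' ∪ B' = S := by
      apply Finset.Subset.antisymm
      · intro x hx
        rcases Finset.mem_union.1 hx with hx | hx
        · obtain ⟨i, _, rfl⟩ := Finset.mem_image.1 hx; exact hmemS i _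
        · obtain ⟨i, _, rfl⟩ := Finset.mem_image.1 hx; exact hmemS i _
      · intro x hx
        obtain ⟨⟨i, b⟩, _, rfl⟩ := Finset.mem_image.1 (hS ▸ hx)
        by_cases hb : b = τ i
        · exact Finset.mem_union_left _ (Finset.mem_image.2 ⟨i, Finset.mem_univ _, by rw [hb]⟩)
        · have hb' : b = !τ i := by revert hb; cases b <;> cases τ i <;> simp
          exact Finset.mem_union_right _ (Finset.mem_image.2 ⟨i, Finset.mem_univ _, by rw [hb']⟩)
    -- a crossing edge of T between R' and B'
    obtain ⟨r, hr⟩ := id hnR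
    obtain ⟨b, hb⟩ := id hnB
    have hrS : r ∈ S := hunion ▸ Finset.mem_union_left _ hr
    have hbS : b ∈ S := hunion ▸ Finset.mem_union_right _ hb
    obtain ⟨t, htT, htc⟩ := exists_cross_edge (hT.2.2 r hrS b hbS) hr
      (Finset.disjoint_right.1 hdRB hb)
    have ht1S : t.1 ∈ S := (hTend t htT).1
    have ht2S : t.2 ∈ S := (hTend t htT).2
    have htw : dist t.1 t.2 ≤ dist h.1 h.2 := hmax t htT
    -- optimal trees on R' and B'
    obtain ⟨FR, hFR, hFRc⟩ := exists_mst hnR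
    obtain ⟨FB, hFB, hFBc⟩ := exists_mst hnB
    have hFdisj : Disjoint FR FB := by
      rw [Finset.disjoint_left]
      intro e heR heB
      exact Finset.disjoint_left.1 hdRB (hFR.1 e heR).1 (hFB.1 e heB).1
    have key : mstCost S ≤ mstCost R' + mstCost B' + dist h.1 h.2 := by
      rcases htc with ⟨ht1, ht2⟩ | ⟨ht2, ht1⟩
      · have ht2B : t.2 ∈ B' := by
          rcases Finset.mem_union.1 (hunion ▸ ht2S) with hc | hc
          · exact absurd hc ht2
          · exact hc
        have htree := union_spanningTree hdRB hFR hFB ht1 ht2B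
        rw [hunion] at htree
        have hnotmem : (t.1, t.2) ∉ FR ∪ FB := by
          intro hmem
          rcases Finset.mem_union.1 hmem with hm | hm
          · exact Finset.disjoint_left.1 hdRB (hFR.1 _ hm).2 ht2B
          · exact (Finset.disjoint_left.1 hdRB ht1) (hFB.1 _ hm).1
        have hcost : ∑ e ∈ insert (t.1, t.2) (FR ∪ FB), dist e.1 e.2
            = dist t.1 t.2 + (∑ e ∈ FR, dist e.1 e.2 + ∑ e ∈ FB, dist e.1 e.2) := by
          rw [Finset.sum_insert hnotmem, Finset.sum_union hFdisj]
        have := mstCost_le htree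
        rw [hcost] at this
        rw [hFRc, hFBc]
        linarith
      · have ht1B : t.1 ∈ B' := by
          rcases Finset.mem_union.1 (hunion ▸ ht1S) with hc | hc
          · exact absurd hc ht1
          · exact hc
        have htree := union_spanningTree hdRB hFR hFB ht2 ht1B
        rw [hunion] at htree
        have hnotmem : (t.2, t.1) ∉ FR ∪ FB := by
          intro hmem
          rcases Finset.mem_union.1 hmem with hm | hm
          · exact Finset.disjoint_left.1 hdRB (hFR.1 _ hm).2 ht1B
          · exact Finset.disjoint_right.1 hdRB (hFB.1 _ hm).1 ht2
        have hcost : ∑ e ∈ insert (t.2, t.1) (FR ∪ FB), dist e.1 e.2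
            = dist t.2 t.1 + (∑ e ∈ FR, dist e.1 e.2 + ∑ e ∈ FB, dist e.1 e.2) := by
          rw [Finset.sum_insert hnotmem, Finset.sum_union hFdisj]
        have := mstCost_le htree
        rw [hcost, dist_comm] at this
        rw [hFRc, hFBc]
        linarith
    linarith [keyB, key]
  refine ⟨⟨σ, hT1, hT2⟩, ?_⟩
  have hbdd : BddBelow (Set.range (fun τ : Fin n → Bool =>
      mstCost (Finset.image (fun i => pts (i, τ i)) Finset.univ) +
      mstCost (Finset.image (fun i => pts (i, !(τ i))) Finset.univ))) := by
    refine ⟨mstCost T₁ + mstCost T₂, ?_⟩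
    rintro c ⟨τ, rfl⟩
    exact lb τ
  apply le_antisymm (le_ciInf lb)
  have := ciInf_le hbdd σ
  calc _ ≤ mstCost (Finset.image (fun i => pts (i, σ i)) Finset.univ) +
      mstCost (Finset.image (fun i => pts (i, !(σ i))) Finset.univ) := this
    _ = mstCost T₁ + mstCost T₂ := by rw [← hT1, ← hT2]
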